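/- Suppose M: [0,∞) → [0,∞) is continuous and satisfies σ·𝓜(t) ≥ M(t)·t for all t ≥ 0 with σ > 1, where 𝓜(t) = ∫₀ᵗ M(s) ds. Then 𝓜(t) ≥ 𝓜(1)·t^σ for all 0 ≤ t ≤ 1. -/

import Mathlib

open Real MeasureTheory

theorem stmt_3 (M : ℝ → ℝ) (hMcont : ContinuousOn M (Set.Ici 0))
    (hMnonneg : ∀ t : ℝ, 0 ≤ t → 0 ≤ M t)
    (σ : ℝ) (hσ : 1 < σ)
    (𝓜 : ℝ → ℝ) (h𝓜 : ∀ t : ℝ, 𝓜 t = ∫ u in (0:ℝ)..t, M u)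
    (hAR : ∀ t : ℝ, 0 ≤ t → σ * 𝓜 t ≥ M t * t) :
    ∀ t : ℝ, 0 ≤ t → t ≤ 1 → 𝓜 t ≥ 𝓜 1 * t ^ σ := by
  have hderiv : ∀ x : ℝ, 0 < x → HasDerivAt 𝓜 (M x) x := by
    intro x hx
    have hEq : 𝓜 = fun s => ∫ u in (0:ℝ)..s, M u := funext h𝓜
    rw [hEq]
    apply intervalIntegral.integral_hasDerivAt_right
    · apply ContinuousOn.intervalIntegrable
      apply hMcont.mono
      rw [Set.uIcc_of_le hx.le]
      exact fun y hy => hy.1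
    · exact ((hMcont.mono (fun y (hy : y ∈ Set.Ioi (0:ℝ)) => Set.mem_Ici.2 (le_of_lt (Set.mem_Ioi.1 hy)))).stronglyMeasurableAtFilter isOpen_Ioi x hx)
    · exact (hMcont x hx.le).continuousAt (Ici_mem_nhds hx)
  -- derivative of g x = 𝓜 x / x ^ σ
  set g : ℝ → ℝ := fun x => 𝓜 x / x ^ σ with hg
  have hgderiv : ∀ x : ℝ, 0 < x →
      HasDerivAt g ((M x * x ^ σ - 𝓜 x * (σ * x ^ (σ - 1))) / (x ^ σ) ^ 2) x := by
    intro x hx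
    exact (hderiv x hx).div (Real.hasDerivAt_rpow_const (Or.inl hx.ne'))
      (Real.rpow_pos_of_pos hx σ).ne'
  have hgderiv_nonpos : ∀ x : ℝ, 0 < x → deriv g x ≤ 0 := by
    intro x hx
    rw [(hgderiv x hx).deriv]
    apply div_nonpos_of_nonpos_of_nonneg _ (sq_nonneg _)
    have h1 : x ^ σ = x ^ (σ - 1) * x := by
      rw [← Real.rpow_add_one hx.ne']; ring_nf
    have h2 : M x * x ≤ σ * 𝓜 x := hAR x hx.le
    have h3 : (0:ℝ) ≤ x ^ (σ - 1) := (Real.rpow_pos_of_pos hx _).le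
    rw [h1]
    nlinarith [mul_le_mul_of_nonneg_right h2 h3]
  intro t ht ht1
  rcases eq_or_lt_of_le ht with h0 | h0
  · -- t = 0
    rw [← h0, Real.zero_rpow (by linarith : σ ≠ 0), mul_zero, h𝓜 0,
      intervalIntegral.integral_same]
  · -- 0 < t : antitone on [t,1]
    have hanti : AntitoneOn g (Set.Icc t 1) := by
      apply antitoneOn_of_deriv_nonpos (convex_Icc t 1)
      · intro x hx
        exact ((hgderiv x (lt_of_lt_of_le h0 hx.1)).continuousAt).continuousWithinAt
      · intro x hx
        rw [interior_Icc] at hx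
        exact ((hgderiv x (lt_trans h0 hx.1)).differentiableAt).differentiableWithinAt
      · intro x hx
        rw [interior_Icc] at hx
        exact hgderiv_nonpos x (lt_trans h0 hx.1)
    have := hanti (Set.mem_Icc.2 ⟨le_refl t, ht1⟩) (Set.mem_Icc.2 ⟨ht1, le_refl 1⟩) ht1
    simp only [hg, Real.one_rpow, div_one] at this
    have htσ : (0:ℝ) < t ^ σ := Real.rpow_pos_of_pos h0 σ
    exact (le_div_iff₀ htσ).mp this
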